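/- Let u : ℤ × ℝ × ℝ → ℝ, (n,x,y) ↦ u_n(x,y), with each u_n twice continuously differentiable, be a solution of the two-dimensional Toda lattice: for all n ∈ ℤ and (x,y) ∈ ℝ², ∂²u_n/∂x∂y = exp(u_{n-1} − u_n) − exp(u_n − u_{n+1}). Let G : ℝ → ℝ be twice continuously differentiable with G'(x) > 0 for all x. Then v_n(x,y) := u_n(G(x), y) − n·log G'(x) is again a solution: ∂²v_n/∂x∂y = exp(v_{n-1} − v_n) − exp(v_n − v_{n+1}) for all n ∈ ℤ, (x,y) ∈ ℝ². -/

import Mathlib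

/-- The symmetry group generated by `X(f) = f(x)∂ₓ + f'(x)n∂_{uₙ}` maps solutions of the
two-dimensional Toda lattice `u_{n,xy} = exp(uₙ₋₁ − uₙ) − exp(uₙ − uₙ₊₁)` to solutions:
if `uₙ(x,y)` is a solution and `G` is an increasing `C²` change of the variable `x`, then
`vₙ(x,y) = uₙ(G(x),y) − n log G'(x)` is again a solution. -/
theorem toda2d_symmetry_Xf (u : ℤ → ℝ → ℝ → ℝ)
    (hu : ∀ n, ContDiff ℝ 2 (fun p : ℝ × ℝ => u n p.1 p.2))
    (hsol : ∀ (n : ℤ) (x y : ℝ),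
      deriv (fun s => deriv (fun r => u n s r) y) x =
        Real.exp (u (n - 1) x y - u n x y) - Real.exp (u n x y - u (n + 1) x y))
    (G : ℝ → ℝ) (hG : ContDiff ℝ 2 G) (hG' : ∀ x, 0 < deriv G x) :
    ∀ (n : ℤ) (x y : ℝ),
      let v : ℤ → ℝ → ℝ → ℝ := fun m s r => u m (G s) r - (m : ℝ) * Real.log (deriv G s)
      deriv (fun s => deriv (fun r => v n s r) y) x =
        Real.exp (v (n - 1) x y - v n x y) - Real.exp (v n x y - v (n + 1) x y) := by
  intro n x y v
  have hG1 : ContDiff ℝ 1 G := hG.of_le one_le_two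
  set f : ℝ × ℝ → ℝ := fun p => u n p.1 p.2 with hfdef
  have hfc : ContDiff ℝ 2 f := hu n
  -- the partial derivative in the second variable, as fderiv applied to (0,1)
  set g : ℝ × ℝ → ℝ := fun p => fderiv ℝ f p (0, 1) with hgdef
  have hg2 : ContDiff ℝ 1 g := by
    have : ContDiff ℝ 1 (fderiv ℝ f) := hfc.fderiv_right (by norm_num)
    exact this.clm_apply contDiff_const
  have key : ∀ w : ℝ, deriv (fun r => u n w r) y = g (w, y) := by
    intro w
    have hp : HasDerivAt (fun r : ℝ => (w, r)) ((0 : ℝ), (1 : ℝ)) y :=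
      (hasDerivAt_const y w).prodMk (hasDerivAt_id y)
    have h1 : HasDerivAt (fun r => f (w, r)) (fderiv ℝ f (w, y) (0, 1)) y :=
      ((hfc.differentiable two_ne_zero (w, y)).hasFDerivAt).comp_hasDerivAt y hp
    exact h1.deriv
  -- h w = ∂_y u n at (w, y)
  set h : ℝ → ℝ := fun w => g (w, y) with hhdef
  have hkey : (fun s => deriv (fun r => u n s r) y) = h := by
    funext w; exact key w
  have hdiffh : ∀ w, HasDerivAt h (deriv h w) w := by
    intro w
    have hp : HasDerivAt (fun w : ℝ => (w, y)) ((1 : ℝ), (0 : ℝ)) w :=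
      (hasDerivAt_id w).prodMk (hasDerivAt_const w y)
    have := ((hg2.differentiable one_ne_zero (w, y)).hasFDerivAt).comp_hasDerivAt w hp
    exact this.differentiableAt.hasDerivAt
  -- inner derivative of v
  have hinner : (fun s => deriv (fun r => v n s r) y) = fun s => h (G s) := by
    funext s
    have : (fun r => v n s r) =
        fun r => u n (G s) r - (n : ℝ) * Real.log (deriv G s) := rfl
    rw [this, deriv_sub_const, key (G s)]
  rw [hinner]
  -- chain rule
  have hcomp : HasDerivAt (fun s => h (G s)) (deriv h (G x) * deriv G x) x :=
    (hdiffh (G x)).comp x (hG1.differentiable one_ne_zero x).hasDerivAt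
  rw [hcomp.deriv]
  have hval : deriv h (G x) =
      Real.exp (u (n - 1) (G x) y - u n (G x) y) -
        Real.exp (u n (G x) y - u (n + 1) (G x) y) := by
    rw [← hkey]; exact hsol n (G x) y
  rw [hval]
  -- algebra on the right-hand side
  have hL : Real.exp (Real.log (deriv G x)) = deriv G x := Real.exp_log (hG' x)
  have e1 : v (n - 1) x y - v n x y =
      (u (n - 1) (G x) y - u n (G x) y) + Real.log (deriv G x) := by
    simp only [v]; push_cast; ring
  have e2 : v n x y - v (n + 1) x y =
      (u n (G x) y - u (n + 1) (G x) y) + Real.log (deriv G x) := by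
    simp only [v]; push_cast; ring
  rw [e1, e2, Real.exp_add, Real.exp_add, hL]
  ring
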